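/- Consider a portfolio of n stocks under the drawdown-modulated feedback controller I_i(k) = γ_i·M(k)·V(k) for i = 1, …, n, where the constant gain vector γ ∈ ℝⁿ satisfies ⟨|X_min|, γ⁺⟩ − ⟨X_max, γ⁻⟩ ≤ 1 and M(k) = (d_max − d(k))/(1 − d(k)). If every realized return vector satisfies X_min,i ≤ X_i(k) ≤ X_max,i for all i, then for all stages k = 0, 1, …, N the drawdown satisfies d(k) ≤ d_max and V(k) > 0. -/

import Mathlib

/-- Running maximum `V_max(k) = max_{0 ≤ i ≤ k} V(i)` of the account value. -/
noncomputable def runMax (V : ℕ → ℝ) (k : ℕ) : ℝ :=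
  (Finset.range (k + 1)).sup' Finset.nonempty_range_add_one V

/-- Percentage drawdown `d(k) = (V_max(k) - V(k)) / V_max(k)`. -/
noncomputable def drawdown (V : ℕ → ℝ) (k : ℕ) : ℝ :=
  (runMax V k - V k) / runMax V k

lemma runMax_succ' (V : ℕ → ℝ) (k : ℕ) :
    runMax V (k + 1) = max (V (k + 1)) (runMax V k) := by
  have h : runMax V (k + 1) = (insert (k+1) (Finset.range (k+1))).sup'
      (Finset.insert_nonempty _ _) V := by
    unfold runMax
    congr 1
    exact Finset.range_add_one
  rw [h, Finset.sup'_insert]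
  rfl

lemma le_runMax (V : ℕ → ℝ) {j k : ℕ} (h : j ≤ k) : V j ≤ runMax V k :=
  Finset.le_sup' V (Finset.mem_range.2 (Nat.lt_succ_of_le h))

theorem portfolio_drawdown_modulated_feedback_control
    (n N : ℕ) (Xmin Xmax : Fin n → ℝ) (dmax : ℝ) (γ : Fin n → ℝ)
    (hb : ∀ i, -1 < Xmin i ∧ Xmin i < 0 ∧ 0 < Xmax i)
    (hdmax0 : 0 < dmax) (hdmax1 : dmax < 1)
    (hγ : (∑ i, |Xmin i| * max (γ i) 0) - (∑ i, Xmax i * min (γ i) 0) ≤ 1)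
    (V : ℕ → ℝ) (I X : ℕ → Fin n → ℝ)
    (hV0 : 0 < V 0)
    (hrec : ∀ k, V (k + 1) = V k + ∑ i, I k i * X k i)
    (hctrl : ∀ k i, I k i = γ i * ((dmax - drawdown V k) / (1 - drawdown V k)) * V k)
    (hX : ∀ k i, Xmin i ≤ X k i ∧ X k i ≤ Xmax i) :
    ∀ k ≤ N, drawdown V k ≤ dmax ∧ 0 < V k := by
  have key : ∀ k, drawdown V k ≤ dmax ∧ 0 < V k := by
    intro k
    induction k with
    | zero =>
      refine ⟨?_, hV0⟩
      simp [drawdown, runMax, Finset.range_one]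
      positivity
    | succ k ih =>
      obtain ⟨hd, hVk⟩ := ih
      set m := runMax V k with hm_def
      have hm0 : 0 < m := lt_of_lt_of_le hV0 (le_runMax V (Nat.zero_le k))
      have hVm : V k ≤ m := le_runMax V le_rfl
      set d := drawdown V k with hd_def
      have hd0 : 0 ≤ d := div_nonneg (by linarith) hm0.le
      have hd1 : d < 1 := by
        rw [hd_def, drawdown, div_lt_one hm0]; linarith
      set M := (dmax - d) / (1 - d) with hM_def
      have hM_eq : M * (1 - d) = dmax - d := div_mul_cancel₀ _ (by linarith)
      have hM0 : 0 ≤ M := div_nonneg (by linarith) (by linarith)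
      have hM1 : M ≤ dmax := by
        rw [hM_def, div_le_iff₀ (by linarith)]; nlinarith
      have hVk_eq : V k = (1 - d) * m := by
        rw [hd_def, drawdown, ← hm_def]; field_simp; ring
      -- the return sum is bounded below by -1
      set S := ∑ i, γ i * X k i with hS_def
      have hS : -1 ≤ S := by
        have hterm : ∀ i, -(|Xmin i| * max (γ i) 0 - Xmax i * min (γ i) 0)
            ≤ γ i * X k i := by
          intro i
          obtain ⟨hb1, hb2, hb3⟩ := hb i
          obtain ⟨hx1, hx2⟩ := hX k i
          rcases le_total 0 (γ i) with hγi | hγi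
          · rw [max_eq_left hγi, min_eq_right hγi, abs_of_neg hb2]
            nlinarith
          · rw [max_eq_right hγi, min_eq_left hγi]
            nlinarith
        calc -1 ≤ -((∑ i, |Xmin i| * max (γ i) 0) - ∑ i, Xmax i * min (γ i) 0) := by
              linarith
          _ = ∑ i, -(|Xmin i| * max (γ i) 0 - Xmax i * min (γ i) 0) := by
              rw [← Finset.sum_sub_distrib, ← Finset.sum_neg_distrib]
          _ ≤ S := Finset.sum_le_sum fun i _ => hterm i
      -- the recursion in product form
      have hrec' : V (k + 1) = V k * (1 + M * S) := by
        rw [hrec k]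
        have : ∀ i, I k i * X k i = M * V k * (γ i * X k i) := by
          intro i; rw [hctrl k i]; ring
        rw [Finset.sum_congr rfl fun i _ => this i, ← Finset.mul_sum, ← hS_def]
        ring
      -- the key lower bound
      have hkey : (1 - dmax) * m ≤ V (k + 1) := by
        rw [hrec', hVk_eq]
        nlinarith [mul_nonneg (mul_nonneg (mul_nonneg (by linarith : (0:ℝ) ≤ 1 - d)
          hm0.le) hM0) (by linarith : (0:ℝ) ≤ S + 1), hM_eq, hm0.le]
      have hVpos : 0 < V (k + 1) := lt_of_lt_of_le (by nlinarith) hkey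
      refine ⟨?_, hVpos⟩
      have hm' : runMax V (k + 1) = max (V (k + 1)) m := runMax_succ' V k
      have hm'0 : 0 < runMax V (k + 1) := by
        rw [hm']; exact lt_max_of_lt_right hm0
      rw [drawdown, div_le_iff₀ hm'0, hm']
      rcases le_total (V (k + 1)) m with h | h
      · rw [max_eq_right h]; nlinarith
      · rw [max_eq_left h]; nlinarith
  exact fun k _ => key k
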